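/- If a predecoration has no quadrangular inner face, then it is a tree, and its number of degree-1 vertices is at most n_A + n_B ≤ 3; consequently such a predecoration is a path or a subdivided star with exactly 3 leaves. -/

import Mathlib

open scoped Classical

/-- A *predecoration*: a finite connected plane graph with a distinguished
outer face, all inner faces quadrangles, every inner vertex of degree at
least 3, and the counting conditions `n_A ≤ 2`, `n_A + n_B + n_C ≤ 3`. -/
structure Predecoration where
  V : Type
  [instFin : Fintype V]
  [instDec : DecidableEq V]
  G : SimpleGraph V
  [instAdj : DecidableRel G.Adj]
  conn : G.Connected
  /-- the inner faces, all of which are quadrangles -/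
  quadFaces : Finset (Finset V)
  quad_card : ∀ Q ∈ quadFaces, Q.card = 4
  /-- the vertices lying on the outer face -/
  outer : Finset V
  /-- the boundary walk of the outer face -/
  outerWalk : List V
  outerWalk_mem : ∀ v ∈ outerWalk, v ∈ outer
  outerWalk_all : ∀ v ∈ outer, v ∈ outerWalk
  outerWalk_chain : List.Chain' G.Adj (outerWalk ++ outerWalk.take 1)
  /-- every inner vertex has degree at least 3 -/
  inner_deg : ∀ v : V, v ∉ outer → 3 ≤ G.degree v
  /-- Euler's formula for a connected plane graph whose inner faces are the
  quadrangles (ordered adjacent pairs count each edge twice) -/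
  euler : 2 * (Fintype.card V + quadFaces.card + 1) =
    (Finset.univ.filter fun p : V × V => G.Adj p.1 p.2).card + 4
  /-- `n_A ≤ 2` -/
  nA_le : (Finset.univ.filter fun v : V => G.degree v = 1 ∧
      ∃ w : V, G.Adj v w ∧ G.degree w = 2).card ≤ 2
  /-- `n_A + n_B + n_C ≤ 3` -/
  nABC_le : (Finset.univ.filter fun v : V => G.degree v = 1 ∧
        ∃ w : V, G.Adj v w ∧ G.degree w = 2).card +
      (Finset.univ.filter fun v : V => G.degree v = 1 ∧
        ¬ ∃ w : V, G.Adj v w ∧ G.degree w = 2).card +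
      (quadFaces.filter fun Q => (Q.filter fun v => G.degree v = 2).card = 3).card ≤ 3

attribute [instance] Predecoration.instFin Predecoration.instDec Predecoration.instAdj

/-- `a` and `b` are consecutive on the boundary walk of the outer face, i.e.
the edge `ab` lies on the outer face. -/
def Predecoration.OuterEdge (P : Predecoration) (a b : P.V) : Prop :=
  [a, b] <:+: (P.outerWalk ++ P.outerWalk.take 1) ∨
    [b, a] <:+: (P.outerWalk ++ P.outerWalk.take 1)

section AuxLemmas
open Finset SimpleGraph

variable {V : Type} [Fintype V] [DecidableEq V]

/-- A connected graph has at least `n - 1` edges. -/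
lemma conn_card_le_edges (G : SimpleGraph V) [DecidableRel G.Adj]
    (hc : G.Connected) : Fintype.card V ≤ G.edgeSet.ncard + 1 := by
  obtain ⟨r⟩ := hc.nonempty
  have claim : ∀ v : V, ∃ w : V, v ≠ r → G.Adj v w ∧ G.dist w r < G.dist v r := by
    intro v
    by_cases h : v = r
    · exact ⟨v, fun hn => absurd h hn⟩
    · obtain ⟨p, hp⟩ := hc.exists_walk_length_eq_dist v r
      cases p with
      | nil => exact absurd rfl h
      | cons hadj q =>
        refine ⟨_, fun _ => ⟨hadj, ?_⟩⟩
        have h1 : G.dist _ r ≤ q.length := SimpleGraph.dist_le q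
        simp only [SimpleGraph.Walk.length_cons] at hp
        omega
  choose w hw using claim
  have hinj : Set.InjOn (fun v => s(v, w v)) (univ.erase r : Finset V) := by
    intro a ha b hb hab
    have ha' : a ≠ r := by simpa using ha
    have hb' : b ≠ r := by simpa using hb
    simp only [Sym2.eq, Sym2.rel_iff', Prod.mk.injEq, Prod.swap_prod_mk] at hab
    rcases hab with ⟨h1, _⟩ | ⟨h1, h2⟩
    · exact h1
    · exfalso
      have hA := (hw a ha').2
      have hB := (hw b hb').2
      rw [h2, h1] at hA
      omega
  have hmaps : ∀ v ∈ univ.erase r, s(v, w v) ∈ G.edgeFinset := by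
    intro v hv
    rw [SimpleGraph.mem_edgeFinset]
    exact (hw v (Finset.mem_erase.1 hv).1).1
  have hcard := Finset.card_le_card_of_injOn _ hmaps hinj
  rw [show G.edgeFinset = G.edgeSet.toFinset from rfl, ← Set.ncard_eq_toFinset_card'] at hcard
  have : (univ.erase r).card = Fintype.card V - 1 := by
    rw [Finset.card_erase_of_mem (Finset.mem_univ r), Finset.card_univ]
  have hpos : 0 < Fintype.card V := Fintype.card_pos_iff.2 ⟨r⟩
  omega

/-- A connected graph with `n - 1` edges is a tree. -/
lemma tree_of_card (G : SimpleGraph V) [DecidableRel G.Adj]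
    (hc : G.Connected) (hcard : G.edgeFinset.card + 1 = Fintype.card V) :
    G.IsTree := by
  refine ⟨hc, ?_⟩
  rw [SimpleGraph.isAcyclic_iff_forall_adj_isBridge]
  intro v x hadj
  by_contra hb
  rw [SimpleGraph.isBridge_iff] at hb
  push_neg at hb
  have hreach := hb
  set G' : SimpleGraph V := G \ SimpleGraph.fromEdgeSet {s(v, x)} with hG'
  -- G' is connected
  have hstep : ∀ a b : V, G.Adj a b → G'.Reachable a b := by
    intro a b hab
    by_cases he : s(a, b) = s(v, x)
    · simp only [Sym2.eq, Sym2.rel_iff', Prod.mk.injEq, Prod.swap_prod_mk] at he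
      rcases he with ⟨rfl, rfl⟩ | ⟨rfl, rfl⟩
      · exact hreach
      · exact hreach.symm
    · refine SimpleGraph.Adj.reachable ?_
      simp only [hG', SimpleGraph.sdiff_adj, SimpleGraph.fromEdgeSet_adj]
      exact ⟨hab, fun h => he h.1⟩
  have hpre : G'.Preconnected := by
    intro a b
    obtain ⟨p⟩ := hc.preconnected a b
    induction p with
    | nil => exact SimpleGraph.Reachable.refl _
    | cons h q ih => exact (hstep _ _ h).trans ih
  haveI : Nonempty V := hc.nonempty
  have hconn' : G'.Connected := ⟨hpre⟩
  have hle := conn_card_le_edges G' hconn'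
  -- edge count of G'
  have hedge : G'.edgeSet = G.edgeSet \ {s(v, x)} := by
    rw [hG', SimpleGraph.edgeSet_sdiff, SimpleGraph.edgeSet_fromEdgeSet,
      SimpleGraph.edgeSet_sdiff_sdiff_isDiag]
  have hmem : s(v, x) ∈ G.edgeSet := hadj
  rw [hedge, Set.ncard_diff_singleton_of_mem hmem] at hle
  have hEcard : #G.edgeFinset = G.edgeSet.ncard := by
    rw [show G.edgeFinset = G.edgeSet.toFinset from rfl, ← Set.ncard_eq_toFinset_card']
  have hpos : 0 < G.edgeSet.ncard := by
    rw [← hEcard]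
    exact Finset.card_pos.2 ⟨_, SimpleGraph.mem_edgeFinset.2 hmem⟩
  omega

end AuxLemmas

/-- If a predecoration has no quadrangular inner face, then
it is a tree with at most `n_A + n_B ≤ 3` vertices of degree 1;
consequently it is a path (all degrees at most 2) or a subdivided star with
exactly 3 leaves (one vertex of degree 3, all others of degree at most 2). -/
theorem quadfree_predecoration_is_tree_or_star (P : Predecoration)
    (hq : P.quadFaces = ∅) :
    P.G.IsTree ∧
      (Finset.univ.filter fun v : P.V => P.G.degree v = 1).card ≤ 3 ∧
      ((∀ v : P.V, P.G.degree v ≤ 2) ∨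
        ((Finset.univ.filter fun v : P.V => P.G.degree v = 1).card = 3 ∧
          ∃ c : P.V, P.G.degree c = 3 ∧ ∀ v : P.V, v ≠ c → P.G.degree v ≤ 2)) := by
  have hq0 : P.quadFaces.card = 0 := by rw [hq]; rfl
  -- edge count
  have hFset : (Finset.univ.filter fun p : P.V × P.V => P.G.Adj p.1 p.2) =
      (Finset.univ.filter fun (x, y) => P.G.Adj x y) := by
    ext ⟨a, b⟩; simp
  have heuler := P.euler
  rw [hq0, hFset, ← SimpleGraph.two_mul_card_edgeFinset] at heuler
  have hcardE : P.G.edgeFinset.card + 1 = Fintype.card P.V := by omega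
  have htree : P.G.IsTree := tree_of_card _ P.conn hcardE
  -- number of leaves
  have hC0 : (P.quadFaces.filter fun Q => (Q.filter fun v => P.G.degree v = 2).card = 3).card = 0 := by
    rw [hq]; rfl
  have habc := P.nABC_le
  rw [hC0] at habc
  set A : Finset P.V := Finset.univ.filter fun v => P.G.degree v = 1 with hA
  have hsplit := Finset.card_filter_add_card_filter_not
    (s := A) (p := fun v => ∃ w : P.V, P.G.Adj v w ∧ P.G.degree w = 2)
  have e1 : (A.filter fun v => ∃ w : P.V, P.G.Adj v w ∧ P.G.degree w = 2) =
      (Finset.univ.filter fun v : P.V => P.G.degree v = 1 ∧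
        ∃ w : P.V, P.G.Adj v w ∧ P.G.degree w = 2) := by
    ext v
    simp only [hA, Finset.mem_filter, Finset.mem_univ, true_and]
  have e2 : (A.filter fun v => ¬ ∃ w : P.V, P.G.Adj v w ∧ P.G.degree w = 2) =
      (Finset.univ.filter fun v : P.V => P.G.degree v = 1 ∧
        ¬ ∃ w : P.V, P.G.Adj v w ∧ P.G.degree w = 2) := by
    ext v
    simp only [hA, Finset.mem_filter, Finset.mem_univ, true_and]
  rw [e1, e2] at hsplit
  have hA3 : A.card ≤ 3 := by omega
  refine ⟨htree, hA3, ?_⟩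
  -- path or star
  by_cases hn : Fintype.card P.V ≤ 1
  · left
    intro v
    have := P.G.degree_lt_card_verts v
    omega
  · -- every vertex has degree at least 1
    have hdeg1 : ∀ v : P.V, 1 ≤ P.G.degree v := by
      intro v
      rw [Nat.succ_le_iff, P.G.degree_pos_iff_exists_adj]
      obtain ⟨u, hu⟩ := Fintype.exists_ne_of_one_lt_card (by omega) v
      obtain ⟨p⟩ := P.conn.preconnected v u
      cases p with
      | nil => exact absurd rfl hu
      | cons h q => exact ⟨_, h⟩
    -- degree sum
    have hhand := P.G.sum_degrees_eq_twice_card_edges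
    set N : Finset P.V := Finset.univ.filter fun v => ¬ P.G.degree v = 1 with hN
    set B : Finset P.V := N.filter fun v => P.G.degree v = 2 with hB
    set R : Finset P.V := N.filter fun v => ¬ P.G.degree v = 2 with hR
    have t1 := Finset.sum_filter_add_sum_filter_not Finset.univ
      (fun v => P.G.degree v = 1) (fun v => P.G.degree v)
    have t2 := Finset.sum_filter_add_sum_filter_not N
      (fun v => P.G.degree v = 2) (fun v => P.G.degree v)
    have c1 := Finset.card_filter_add_card_filter_not
      (s := (Finset.univ : Finset P.V)) (p := fun v => P.G.degree v = 1)
    have c2 := Finset.card_filter_add_card_filter_not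
      (s := N) (p := fun v => P.G.degree v = 2)
    have hsA : ∑ v ∈ A, P.G.degree v = A.card := by
      rw [Finset.sum_congr rfl (fun v hv => (Finset.mem_filter.1 hv).2)]
      simp [mul_comm, hA]
    have hsB : ∑ v ∈ B, P.G.degree v = 2 * B.card := by
      rw [Finset.sum_congr rfl (fun v hv => (Finset.mem_filter.1 hv).2)]
      simp [mul_comm, hB]
    have hsR : 3 * R.card ≤ ∑ v ∈ R, P.G.degree v := by
      rw [mul_comm, ← smul_eq_mul]
      refine Finset.card_nsmul_le_sum R _ 3 ?_
      intro v hv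
      simp only [hR, hN, Finset.mem_filter, Finset.mem_univ, true_and] at hv
      have := hdeg1 v
      omega
    simp only [← hN] at t1 c1
    simp only [← hA] at t1 c1
    simp only [← hB, ← hR] at t2 c2
    rw [Finset.card_univ] at c1
    have h2E : ∑ v ∈ A, P.G.degree v + ∑ v ∈ N, P.G.degree v = 2 * P.G.edgeFinset.card := by
      rw [t1]; exact hhand
    have hcardV : Fintype.card P.V = A.card + N.card := c1.symm
    have hR1 : R.card ≤ 1 := by omega
    by_cases hR0 : R.card = 0
    · left
      intro v
      by_contra hv
      push_neg at hv
      have hvR : v ∈ R := by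
        simp only [hR, hN, Finset.mem_filter, Finset.mem_univ, true_and]
        omega
      rw [Finset.card_eq_zero] at hR0
      rw [hR0] at hvR
      exact absurd hvR (Finset.notMem_empty v)
    · right
      have hRc : R.card = 1 := by omega
      obtain ⟨c, hc⟩ := Finset.card_eq_one.1 hRc
      have hsumc : ∑ v ∈ R, P.G.degree v = P.G.degree c := by
        rw [hc, Finset.sum_singleton]
      have hcR : c ∈ R := by rw [hc]; exact Finset.mem_singleton_self c
      have hc3 : 3 ≤ P.G.degree c := by
        simp only [hR, hN, Finset.mem_filter, Finset.mem_univ, true_and] at hcR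
        have := hdeg1 c
        omega
      have hdegc : P.G.degree c = 3 := by omega
      refine ⟨by omega, c, hdegc, ?_⟩
      intro v hv
      by_contra h
      push_neg at h
      have hvR : v ∈ R := by
        simp only [hR, hN, Finset.mem_filter, Finset.mem_univ, true_and]
        omega
      rw [hc, Finset.mem_singleton] at hvR
      exact hv hvR
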